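/- The one-loop Matsubara D-function D(p,E,T) = (−1)^{I+1} ∑_{l=1}^I [d_l(p,E) + n(E_l)(1 + S_l)d_l(p,E)] can be written as D(p,E,T) = [1 + ∑_{j=1}^I n(E_j)(1 + S_j)] D_0(p,E), where D_0(p,E) = (−1)^{I+1} ∑_{l=1}^I d_l(p,E). -/
import Mathlib


open Complex

/-- Bose-Einstein occupation factor. -/
noncomputable def nB (β x : ℝ) : ℝ := (Real.exp (β * x) - 1)⁻¹

/-- The auxiliary one-loop function
d_l(p,E) = ∏_{j≠l} ∑_{σ_j=±1} σ_j/(i(u_j−u_l) − E_l − σ_j E_j). -/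
noncomputable def dFun {I : ℕ} (u : Fin I → ℝ) (l : Fin I) (E : Fin I → ℝ) : ℂ :=
  ∏ j ∈ Finset.univ.erase l,
    ((Complex.I * ((u j - u l : ℝ) : ℂ) - (E l : ℂ) - (E j : ℂ))⁻¹
      - (Complex.I * ((u j - u l : ℝ) : ℂ) - (E l : ℂ) + (E j : ℂ))⁻¹)

/-- The zero-temperature D-function of the one-loop diagram:
D₀(p,E) = (−1)^{I+1} ∑_l d_l(p,E). -/
noncomputable def D0 {I : ℕ} (u : Fin I → ℝ) (E : Fin I → ℝ) : ℂ :=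
  (-1 : ℂ) ^ (I + 1) * ∑ l, dFun u l E

lemma dFun_flip {I : ℕ} (u E : Fin I → ℝ) (l j : Fin I) (h : j ≠ l) :
    dFun u l (Function.update E j (-(E j))) = - dFun u l E := by
  classical
  unfold dFun
  have hj : j ∈ Finset.univ.erase l := Finset.mem_erase.mpr ⟨h, Finset.mem_univ j⟩
  rw [← Finset.mul_prod_erase _ _ hj, ← Finset.mul_prod_erase _ _ hj]
  have h1 : ∀ k, k ≠ j → Function.update E j (-(E j)) k = E k := fun k hk =>
    Function.update_of_ne hk _ _
  have hl : Function.update E j (-(E j)) l = E l := h1 l (fun hh => h hh.symm)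
  have hjj : Function.update E j (-(E j)) j = -(E j) := Function.update_self _ _ _
  have hp : ∏ k ∈ (Finset.univ.erase l).erase j,
      ((Complex.I * ((u k - u l : ℝ) : ℂ) - (Function.update E j (-(E j)) l : ℂ)
          - (Function.update E j (-(E j)) k : ℂ))⁻¹
        - (Complex.I * ((u k - u l : ℝ) : ℂ) - (Function.update E j (-(E j)) l : ℂ)
          + (Function.update E j (-(E j)) k : ℂ))⁻¹)
      = ∏ k ∈ (Finset.univ.erase l).erase j,
      ((Complex.I * ((u k - u l : ℝ) : ℂ) - (E l : ℂ) - (E k : ℂ))⁻¹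
        - (Complex.I * ((u k - u l : ℝ) : ℂ) - (E l : ℂ) + (E k : ℂ))⁻¹) := by
    refine Finset.prod_congr rfl (fun k hk => ?_)
    rw [h1 k (Finset.mem_erase.mp hk).1, hl]
  rw [hp, hl, hjj]
  have h2 : ((-(E j) : ℝ) : ℂ) = -((E j : ℝ) : ℂ) := by push_cast; ring
  rw [h2, sub_neg_eq_add, show Complex.I * ((u j - u l : ℝ) : ℂ) - (E l : ℂ) + -(E j : ℂ)
    = Complex.I * ((u j - u l : ℝ) : ℂ) - (E l : ℂ) - (E j : ℂ) by ring]
  ring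

lemma sum_flip {I : ℕ} (u E : Fin I → ℝ) (j : Fin I) :
    ∑ l, (dFun u l E + dFun u l (Function.update E j (-(E j))))
      = dFun u j E + dFun u j (Function.update E j (-(E j))) := by
  classical
  refine Finset.sum_eq_single j (fun l _ hl => ?_) (by simp)
  rw [dFun_flip u E l j (fun hh => hl hh.symm)]; ring

/-- The one-loop Matsubara D-function
D(p,E,T) = (−1)^{I+1} ∑_l [d_l + n(E_l)(1+S_l)d_l] equals
[1 + ∑_j n(E_j)(1+S_j)] D₀(p,E). -/
theorem one_loop_TOR (I : ℕ) (hI : 2 ≤ I) (β : ℝ) (hβ : 0 < β)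
    (u E : Fin I → ℝ) (hE : ∀ j, 0 < E j)
    (hden : ∀ (E' : Fin I → ℝ), (∀ k, E' k = E k ∨ E' k = -E k) →
      ∀ l k : Fin I, k ≠ l → ∀ s : ℝ, s = 1 ∨ s = -1 →
        Complex.I * ((u k - u l : ℝ) : ℂ) - (E' l : ℂ) - (s : ℂ) * (E' k : ℂ) ≠ 0) :
    (-1 : ℂ) ^ (I + 1) * ∑ l, (dFun u l E
        + (nB β (E l) : ℂ) * (dFun u l E + dFun u l (Function.update E l (-(E l)))))
      = D0 u E + ∑ j, (nB β (E j) : ℂ) * (D0 u E + D0 u (Function.update E j (-(E j)))) := by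
  classical
  have key : ∀ j, D0 u E + D0 u (Function.update E j (-(E j)))
      = (-1 : ℂ) ^ (I + 1) * (dFun u j E + dFun u j (Function.update E j (-(E j)))) := by
    intro j
    unfold D0
    rw [← mul_add, ← Finset.sum_add_distrib, sum_flip]
  simp only [key]
  unfold D0
  rw [Finset.mul_sum, Finset.mul_sum, ← Finset.sum_add_distrib]
  refine Finset.sum_congr rfl (fun l _ => ?_)
  ring
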